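/- Let H be a real inner product space and L : H → H a linear map that is symmetric (⟨Lw, v⟩ = ⟨w, Lv⟩ for all w, v) and nonpositive (⟨Lw, w⟩ ≤ 0 for all w). Let τ_1, …, τ_N > 0 be time steps satisfying condition S1, let u^0, u^1 ∈ H be arbitrary, and suppose u^2, …, u^N ∈ H satisfy the BDF2 scheme D_2 u^n = L u^n + f^n only for 2 ≤ n ≤ N (any starting scheme may produce u^1). Then for every 2 ≤ n ≤ N, ‖u^n‖ ≤ ‖u^1‖ + 2·t_n·‖(u^1 − u^0)/τ_1‖ + 2·t_n·max_{2≤j≤n} ‖f^j‖. -/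

import Mathlib

open Finset

/-- BDF2 convolution kernels `b^{(n)}_j` built from the step sizes `τ`. -/
noncomputable def bdf2 (τ : ℕ → ℝ) (n j : ℕ) : ℝ :=
  if n = 1 then (if j = 0 then 1 / τ 1 else 0)
  else if j = 0 then (1 + 2 * (τ n / τ (n - 1))) / (τ n * (1 + τ n / τ (n - 1)))
  else if j = 1 then -(τ n / τ (n - 1)) ^ 2 / (τ n * (1 + τ n / τ (n - 1)))
  else 0

/-- DOC kernels: `doc τ n g = θ^{(n)}_g`, defined by the recursive procedure
`θ^{(n)}_0 = 1/b^{(n)}_0`, `θ^{(n)}_{n-k} = -(1/b^{(k)}_0) ∑_{j=k+1}^n θ^{(n)}_{n-j} b^{(j)}_{j-k}`. -/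
noncomputable def doc (τ : ℕ → ℝ) (n : ℕ) : ℕ → ℝ
  | 0 => 1 / bdf2 τ n 0
  | (g + 1) =>
    -(1 / bdf2 τ (n - (g + 1)) 0) *
      ∑ i ∈ (Finset.range (g + 1)).attach,
        doc τ n i.1 * bdf2 τ (n - i.1) (g + 1 - i.1)
  decreasing_by exact Finset.mem_range.mp i.2

/-- The variable-step BDF2 formula `D_2 v^n = ∑_{k=1}^n b^{(n)}_{n-k} (v^k - v^{k-1})`. -/
noncomputable def D2 {V : Type*} [AddCommGroup V] [Module ℝ V]
    (τ : ℕ → ℝ) (v : ℕ → V) (n : ℕ) : V :=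
  ∑ k ∈ Finset.Icc 1 n, bdf2 τ n (n - k) • (v k - v (k - 1))

/-- Time levels `t_n = τ_1 + ⋯ + τ_n`. -/
noncomputable def tlv (τ : ℕ → ℝ) (n : ℕ) : ℝ := ∑ i ∈ Finset.Icc 1 n, τ i

variable {τ : ℕ → ℝ}

lemma bdf2_of_two_le_j {k j : ℕ} (hj : 2 ≤ j) : bdf2 τ k j = 0 := by
  have h1 : j ≠ 0 := by omega
  have h2 : j ≠ 1 := by omega
  unfold bdf2; rcases eq_or_ne k 1 with h | h <;> simp [h, h1, h2]

lemma bdf2_one_one : bdf2 τ 1 1 = 0 := by simp [bdf2]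

lemma bdf2_one_zero : bdf2 τ 1 0 = (τ 1)⁻¹ := by simp [bdf2, one_div]

lemma bdf2_zero {k : ℕ} (hk : 2 ≤ k) :
    bdf2 τ k 0 = (1 + 2 * (τ k / τ (k - 1))) / (τ k * (1 + τ k / τ (k - 1))) := by
  have : k ≠ 1 := by omega
  simp [bdf2, this]

lemma bdf2_one {k : ℕ} (hk : 2 ≤ k) :
    bdf2 τ k 1 = -(τ k / τ (k - 1)) ^ 2 / (τ k * (1 + τ k / τ (k - 1))) := by
  have : k ≠ 1 := by omega
  simp [bdf2, this]

lemma doc_succ (n g : ℕ) :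
    doc τ n (g + 1) = -(1 / bdf2 τ (n - (g + 1)) 0) * (doc τ n g * bdf2 τ (n - g) 1) := by
  rw [doc]
  congr 1
  rw [Finset.sum_attach (Finset.range (g+1)) (fun i => doc τ n i * bdf2 τ (n - i) (g + 1 - i)),
    Finset.sum_range_succ]
  rw [Finset.sum_eq_zero, zero_add]
  · norm_num
  · intro i hi
    have hi' : i < g := Finset.mem_range.mp hi
    have : 2 ≤ g + 1 - i := by omega
    rw [bdf2_of_two_le_j this, mul_zero]

section Pos
variable {N : ℕ}
variable (hτ : ∀ k, 1 ≤ k → k ≤ N → 0 < τ k)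
variable (hS1 : ∀ k, 2 ≤ k → k ≤ N →
      0 < τ k / τ (k - 1) ∧ τ k / τ (k - 1) ≤ (3 + Real.sqrt 17) / 2)

include hτ hS1 in
lemma b0_pos {k : ℕ} (h1 : 1 ≤ k) (h2 : k ≤ N) : 0 < bdf2 τ k 0 := by
  rcases eq_or_lt_of_le h1 with h | h
  · rw [← h, bdf2_one_zero]
    exact inv_pos.mpr (hτ 1 le_rfl (le_trans h1.ge.le h2))
  · have hk2 : 2 ≤ k := h
    rw [bdf2_zero hk2]
    have hr := (hS1 k hk2 h2).1
    have hτk := hτ k h1 h2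
    positivity

include hτ hS1 in
lemma b1_nonpos {k : ℕ} (h1 : 1 ≤ k) (h2 : k ≤ N) : bdf2 τ k 1 ≤ 0 := by
  rcases eq_or_lt_of_le h1 with h | h
  · rw [← h, bdf2_one_one]
  · have hk2 : 2 ≤ k := h
    rw [bdf2_one hk2]
    have hr := (hS1 k hk2 h2).1
    have hτk := hτ k h1 h2
    have hd : 0 < τ k * (1 + τ k / τ (k - 1)) := by positivity
    exact div_nonpos_of_nonpos_of_nonneg (neg_nonpos.mpr (sq_nonneg _)) hd.le

include hτ hS1 in
lemma doc_nonneg {n : ℕ} (hn2 : 2 ≤ n) (hnN : n ≤ N) :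
    ∀ g, g ≤ n - 1 → 0 ≤ doc τ n g := by
  intro g
  induction g with
  | zero =>
    intro _
    rw [doc]
    exact le_of_lt (one_div_pos.mpr (b0_pos hτ hS1 (by omega) hnN))
  | succ g ih =>
    intro hg
    have hg' : g ≤ n - 1 := by omega
    rw [doc_succ]
    have h1 : 0 < bdf2 τ (n - (g+1)) 0 := b0_pos hτ hS1 (by omega) (by omega)
    have h2 : bdf2 τ (n - g) 1 ≤ 0 := b1_nonpos hτ hS1 (by omega) (by omega)
    have h3 : 0 ≤ doc τ n g := ih hg'
    have : doc τ n g * bdf2 τ (n - g) 1 ≤ 0 := mul_nonpos_iff.mpr (Or.inl ⟨h3, h2⟩)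
    nlinarith [one_div_pos.mpr h1]
end Pos

lemma doc_zero_mul {n : ℕ} (hb : bdf2 τ n 0 ≠ 0) : doc τ n 0 * bdf2 τ n 0 = 1 := by
  rw [doc]; field_simp

lemma doc_inv {n j : ℕ} (h1 : 1 ≤ j) (h2 : j ≤ n - 1) (hn : 2 ≤ n) (hb : bdf2 τ j 0 ≠ 0) :
    doc τ n (n - j) * bdf2 τ j 0 + doc τ n (n - (j+1)) * bdf2 τ (j+1) 1 = 0 := by
  have e1 : n - j = (n - (j+1)) + 1 := by omega
  have e2 : n - ((n - (j+1)) + 1) = j := by omega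
  have e3 : n - (n - (j+1)) = j + 1 := by omega
  rw [e1, doc_succ, e2, e3]
  field_simp
  ring

lemma doc_sum_eq {V : Type*} [AddCommGroup V] [Module ℝ V] (v : ℕ → V) {n : ℕ}
    (hn : 1 ≤ n) (hb : ∀ j, 1 ≤ j → j ≤ n → bdf2 τ j 0 ≠ 0) :
    ∑ j ∈ Icc 1 n, doc τ n (n - j) • (bdf2 τ j 0 • v j + bdf2 τ j 1 • v (j - 1)) = v n := by
  have hIcc : ∀ (F : ℕ → V), ∑ j ∈ Icc 1 n, F j = ∑ i ∈ range n, F (i + 1) := by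
    intro F
    rw [← Finset.Ico_add_one_right_eq_Icc, Finset.sum_Ico_eq_sum_range]
    simp [Nat.add_comm]
  rw [hIcc]
  simp only [Nat.add_sub_cancel]
  have split : ∀ i, doc τ n (n - (i+1)) • (bdf2 τ (i+1) 0 • v (i+1) + bdf2 τ (i+1) 1 • v i)
      = (doc τ n (n - (i+1)) * bdf2 τ (i+1) 0) • v (i+1)
        + (doc τ n (n - (i+1)) * bdf2 τ (i+1) 1) • v i := by
    intro i; rw [smul_add, smul_smul, smul_smul]
  simp only [split]
  rw [Finset.sum_add_distrib]
  obtain ⟨m, rfl⟩ : ∃ m, n = m + 1 := ⟨n - 1, by omega⟩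
  rw [Finset.sum_range_succ (fun i => (doc τ (m+1) (m+1 - (i+1)) * bdf2 τ (i+1) 0) • v (i+1)),
      Finset.sum_range_succ' (fun i => (doc τ (m+1) (m+1 - (i+1)) * bdf2 τ (i+1) 1) • v i)]
  have htop : (doc τ (m+1) (m+1 - (m+1)) * bdf2 τ (m+1) 0) • v (m+1) = v (m+1) := by
    rw [Nat.sub_self, doc_zero_mul (hb (m+1) (by omega) le_rfl), one_smul]
  have hbot : (doc τ (m+1) (m+1 - (0+1)) * bdf2 τ (0+1) 1) • v 0 = (0:V) := by
    rw [bdf2_one_one, mul_zero, zero_smul]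
  rw [htop, hbot, add_zero, add_right_comm, ← Finset.sum_add_distrib]
  have hz : ∀ i ∈ range m,
      ((doc τ (m+1) (m+1 - (i+1)) * bdf2 τ (i+1) 0) • v (i+1)
        + (doc τ (m+1) (m+1 - (i+1+1)) * bdf2 τ (i+1+1) 1) • v (i+1)) = (0:V) := by
    intro i hi
    have hi' : i < m := Finset.mem_range.mp hi
    rw [← add_smul, doc_inv (by omega) (by omega) (by omega) (hb (i+1) (by omega) (by omega)),
      zero_smul]
  rw [Finset.sum_congr rfl hz]
  simp

lemma b_tau {N j : ℕ} (hτ : ∀ k, 1 ≤ k → k ≤ N → 0 < τ k) (h1 : 1 ≤ j) (h2 : j ≤ N) :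
    bdf2 τ j 0 * τ j + bdf2 τ j 1 * τ (j - 1) = 1 := by
  rcases eq_or_lt_of_le h1 with h | h
  · rw [← h, bdf2_one_zero, bdf2_one_one]
    field_simp
    simp [div_self (ne_of_gt (hτ 1 le_rfl (by omega)))]
  · have hj2 : 2 ≤ j := h
    rw [bdf2_zero hj2, bdf2_one hj2]
    have hτj := hτ j h1 h2
    have hτj1 := hτ (j-1) (by omega) (by omega)
    have hr : 0 < τ j / τ (j-1) := div_pos hτj hτj1
    have h1r : (0:ℝ) < 1 + τ j / τ (j-1) := by linarith
    field_simp
    ring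

lemma doc_sum_tau {N n : ℕ} (hτ : ∀ k, 1 ≤ k → k ≤ N → 0 < τ k)
    (hS1 : ∀ k, 2 ≤ k → k ≤ N →
      0 < τ k / τ (k - 1) ∧ τ k / τ (k - 1) ≤ (3 + Real.sqrt 17) / 2)
    (hn : 1 ≤ n) (hnN : n ≤ N) :
    ∑ j ∈ Icc 1 n, doc τ n (n - j) = τ n := by
  have := doc_sum_eq (V := ℝ) τ hn
    (fun j hj1 hj2 => ne_of_gt (b0_pos hτ hS1 hj1 (le_trans hj2 hnN)))
  rw [← this]
  apply Finset.sum_congr rfl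
  intro j hj
  rw [Finset.mem_Icc] at hj
  have : bdf2 τ j 0 • τ j + bdf2 τ j 1 • τ (j - 1) = 1 := b_tau hτ hj.1 (le_trans hj.2 hnN)
  rw [this]
  simp

lemma D2_two {V : Type*} [AddCommGroup V] [Module ℝ V] (u : ℕ → V) {j : ℕ} (hj : 1 ≤ j) :
    D2 τ u j = bdf2 τ j 0 • (u j - u (j-1)) + bdf2 τ j 1 • (u (j-1) - u (j-2)) := by
  unfold D2
  rcases eq_or_lt_of_le hj with h | h
  · rw [← h]
    simp [bdf2_one_one]
  · obtain ⟨m, rfl⟩ : ∃ m, j = m + 2 := ⟨j - 2, by omega⟩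
    have e1 : Icc 1 (m+2) = insert (m+2) (insert (m+1) (Icc 1 m)) := by
      ext x; simp only [Finset.mem_Icc, Finset.mem_insert]; omega
    rw [e1, Finset.sum_insert (by simp only [Finset.mem_Icc, Finset.mem_insert]; omega),
      Finset.sum_insert (by simp only [Finset.mem_Icc]; omega)]
    rw [Finset.sum_eq_zero, add_zero]
    · have e2 : m + 2 - (m + 2) = 0 := by omega
      have e3 : m + 2 - (m + 1) = 1 := by omega
      have e4 : m + 2 - 1 = m + 1 := by omega
      have e5 : m + 1 - 1 = m := by omega
      have e6 : m + 2 - 2 = m := by omega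
      rw [e2, e3, e4, e5, e6]
    · intro k hk
      rw [Finset.mem_Icc] at hk
      rw [bdf2_of_two_le_j (by omega), zero_smul]

lemma rep1 {V : Type*} [AddCommGroup V] [Module ℝ V] (u : ℕ → V) {N n : ℕ}
    (hτ : ∀ k, 1 ≤ k → k ≤ N → 0 < τ k)
    (hS1 : ∀ k, 2 ≤ k → k ≤ N →
      0 < τ k / τ (k - 1) ∧ τ k / τ (k - 1) ≤ (3 + Real.sqrt 17) / 2)
    (hn : 1 ≤ n) (hnN : n ≤ N) :
    u n - u (n - 1) = ∑ j ∈ Icc 1 n, doc τ n (n - j) • D2 τ u j := by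
  have hb : ∀ j, 1 ≤ j → j ≤ n → bdf2 τ j 0 ≠ 0 :=
    fun j hj1 hj2 => ne_of_gt (b0_pos hτ hS1 hj1 (le_trans hj2 hnN))
  have h0 := doc_sum_eq (V := V) (fun j => u j - u (j - 1)) hn hb
  rw [← h0]
  apply Finset.sum_congr rfl
  intro j hj
  rw [Finset.mem_Icc] at hj
  rw [D2_two u hj.1]
  have : j - 1 - 1 = j - 2 := by omega
  rw [this]

noncomputable def wseq (τ : ℕ → ℝ) {V : Type*} [AddCommGroup V] [Module ℝ V]
    (u : ℕ → V) : ℕ → V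
  | 0 => 0
  | 1 => 0
  | (k+2) => (bdf2 τ (k+2) 0)⁻¹ • (u (k+2) - bdf2 τ (k+2) 1 • wseq τ u (k+1))

lemma wseq_prop {V : Type*} [AddCommGroup V] [Module ℝ V] (u : ℕ → V) {k : ℕ}
    (hk : 2 ≤ k) (hb : bdf2 τ k 0 ≠ 0) :
    bdf2 τ k 0 • wseq τ u k + bdf2 τ k 1 • wseq τ u (k - 1) = u k := by
  obtain ⟨m, rfl⟩ : ∃ m, k = m + 2 := ⟨k - 2, by omega⟩
  have e : m + 2 - 1 = m + 1 := by omega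
  rw [e, wseq, smul_inv_smul₀ hb]
  abel

lemma w_rep {V : Type*} [AddCommGroup V] [Module ℝ V] (u : ℕ → V) {N n : ℕ}
    (hτ : ∀ k, 1 ≤ k → k ≤ N → 0 < τ k)
    (hS1 : ∀ k, 2 ≤ k → k ≤ N →
      0 < τ k / τ (k - 1) ∧ τ k / τ (k - 1) ≤ (3 + Real.sqrt 17) / 2)
    (hn : 2 ≤ n) (hnN : n ≤ N) :
    ∑ j ∈ Icc 2 n, doc τ n (n - j) • u j = wseq τ u n := by
  have hb : ∀ j, 1 ≤ j → j ≤ n → bdf2 τ j 0 ≠ 0 :=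
    fun j hj1 hj2 => ne_of_gt (b0_pos hτ hS1 hj1 (le_trans hj2 hnN))
  have key := doc_sum_eq (V := V) (wseq τ u) (by omega) hb
  rw [← key]
  have e1 : Icc 1 n = insert 1 (Icc 2 n) := by
    ext x; simp only [Finset.mem_Icc, Finset.mem_insert]; omega
  rw [e1, Finset.sum_insert (by simp only [Finset.mem_Icc]; omega)]
  have h1 : doc τ n (n - 1) • (bdf2 τ 1 0 • wseq τ u 1 + bdf2 τ 1 1 • wseq τ u (1-1)) = 0 := by
    show doc τ n (n - 1) • (bdf2 τ 1 0 • wseq τ u 1 + bdf2 τ 1 1 • wseq τ u 0) = 0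
    rw [bdf2_one_one, zero_smul, add_zero]
    show doc τ n (n - 1) • (bdf2 τ 1 0 • (0:V)) = 0
    rw [smul_zero, smul_zero]
  rw [h1, zero_add]
  apply Finset.sum_congr rfl
  intro j hj
  rw [Finset.mem_Icc] at hj
  rw [wseq_prop u hj.1 (hb j (by omega) hj.2)]

lemma key_poly {R ρ : ℝ} (hR2 : R^2 = 3*R + 2) (hR : (7:ℝ)/2 ≤ R)
    (h0 : 0 ≤ ρ) (h1 : ρ ≤ R) : R * (1 + ρ) ≤ (2 + 4*ρ - ρ^2) * (1 + R) := by
  nlinarith [mul_nonneg (sub_nonneg.mpr h1) h0, sub_nonneg.mpr h1, mul_nonneg (mul_nonneg (sub_nonneg.mpr h1) h0) (by linarith : (0:ℝ) ≤ R)]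

lemma R_facts : ((3 + Real.sqrt 17)/2)^2 = 3*((3 + Real.sqrt 17)/2) + 2 ∧ (7:ℝ)/2 ≤ (3 + Real.sqrt 17)/2 := by
  have h17 : Real.sqrt 17 ^ 2 = 17 := Real.sq_sqrt (by norm_num)
  have h4 : (4:ℝ) ≤ Real.sqrt 17 := by
    rw [show (4:ℝ) = Real.sqrt 16 by rw [show (16:ℝ) = 4^2 by norm_num, Real.sqrt_sq]; norm_num]
    exact Real.sqrt_le_sqrt (by norm_num)
  constructor
  · nlinarith
  · linarith

lemma psd_cs {H : Type*} [NormedAddCommGroup H] [InnerProductSpace ℝ H] (L : H →ₗ[ℝ] H)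
    (hsym : ∀ w v : H, (inner ℝ (L w) v : ℝ) = inner ℝ w (L v))
    (hneg : ∀ w : H, (inner ℝ (L w) w : ℝ) ≤ 0) (x y : H) :
    -(inner ℝ (L x) y : ℝ) ≤
      Real.sqrt (-(inner ℝ (L x) x : ℝ)) * Real.sqrt (-(inner ℝ (L y) y : ℝ)) := by
  have hxx : (0:ℝ) ≤ -(inner ℝ (L x) x : ℝ) := neg_nonneg.mpr (hneg x)
  have hyy : (0:ℝ) ≤ -(inner ℝ (L y) y : ℝ) := neg_nonneg.mpr (hneg y)
  have hsym' : (inner ℝ (L y) x : ℝ) = inner ℝ (L x) y := by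
    rw [hsym y x, real_inner_comm]
  have hquad : ∀ t : ℝ, 0 ≤ (-(inner ℝ (L y) y : ℝ)) * (t*t)
      + (2 * -(inner ℝ (L x) y : ℝ)) * t + (-(inner ℝ (L x) x : ℝ)) := by
    intro t
    have h := hneg (x + t • y)
    have hexp : (inner ℝ (L (x + t • y)) (x + t • y) : ℝ)
        = inner ℝ (L x) x + t * inner ℝ (L x) y + t * inner ℝ (L y) x
          + t * (t * inner ℝ (L y) y) := by
      rw [map_add, map_smul]
      rw [inner_add_left, inner_add_right, inner_add_right]
      simp only [real_inner_smul_left, real_inner_smul_right]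
      ring
    rw [hexp, hsym'] at h
    nlinarith
  have hdisc := discrim_le_zero hquad
  rw [discrim] at hdisc
  have hsq : (-(inner ℝ (L x) y : ℝ))^2 ≤ (-(inner ℝ (L x) x : ℝ)) * (-(inner ℝ (L y) y : ℝ)) := by
    nlinarith
  calc -(inner ℝ (L x) y : ℝ) ≤ |(-(inner ℝ (L x) y : ℝ))| := le_abs_self _
    _ = Real.sqrt ((-(inner ℝ (L x) y : ℝ))^2) := (Real.sqrt_sq_eq_abs _).symm
    _ ≤ Real.sqrt ((-(inner ℝ (L x) x : ℝ)) * (-(inner ℝ (L y) y : ℝ))) := Real.sqrt_le_sqrt hsq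
    _ = Real.sqrt (-(inner ℝ (L x) x : ℝ)) * Real.sqrt (-(inner ℝ (L y) y : ℝ)) :=
        Real.sqrt_mul hxx _

lemma key_step {N n : ℕ}
    (hτ : ∀ k, 1 ≤ k → k ≤ N → 0 < τ k)
    (hS1 : ∀ k, 2 ≤ k → k ≤ N →
      0 < τ k / τ (k - 1) ∧ τ k / τ (k - 1) ≤ (3 + Real.sqrt 17) / 2)
    (hn : 2 ≤ n) (hnN : n ≤ N) {s : ℝ} (hs : 0 ≤ s) (hs' : s ≤ (3 + Real.sqrt 17) / 2) :
    s / ((1 + s) * τ n) ≤ 2 * bdf2 τ n 0 + bdf2 τ n 1 := by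
  obtain ⟨hR2, hR⟩ := R_facts
  set R : ℝ := (3 + Real.sqrt 17) / 2 with hRdef
  set ρ : ℝ := τ n / τ (n-1) with hρdef
  have hρ0 : 0 < ρ := (hS1 n hn hnN).1
  have hρR : ρ ≤ R := (hS1 n hn hnN).2
  have hτn : 0 < τ n := hτ n (by omega) hnN
  have h1s : (0:ℝ) < 1 + s := by linarith
  have h1R : (0:ℝ) < 1 + R := by linarith
  have h1ρ : (0:ℝ) < 1 + ρ := by linarith
  have hA : s / (1 + s) ≤ R / (1 + R) := by
    rw [div_le_div_iff₀ h1s h1R]; nlinarith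
  have hB : R / (1 + R) ≤ (2 + 4*ρ - ρ^2) / (1 + ρ) := by
    rw [div_le_div_iff₀ h1R h1ρ]
    have := key_poly hR2 hR hρ0.le hρR
    nlinarith
  have hchain : s / (1 + s) ≤ (2 + 4*ρ - ρ^2) / (1 + ρ) := le_trans hA hB
  have hgoal : s / ((1 + s) * τ n) = (s / (1 + s)) / τ n := by
    rw [div_div]
  rw [hgoal, bdf2_zero hn, bdf2_one hn, ← hρdef]
  have hrhs : 2 * ((1 + 2*ρ) / (τ n * (1 + ρ))) + -ρ^2 / (τ n * (1 + ρ))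
      = ((2 + 4*ρ - ρ^2) / (1 + ρ)) / τ n := by
    field_simp
    ring
  rw [show (1 + 2 * (τ n / τ (n-1))) / (τ n * (1 + τ n / τ (n-1))) = (1 + 2*ρ) / (τ n * (1 + ρ)) from rfl,
    show -(τ n / τ (n-1))^2 / (τ n * (1 + τ n / τ (n-1))) = -ρ^2 / (τ n * (1 + ρ)) from rfl,
    hrhs]
  exact div_le_div_of_nonneg_right hchain hτn.le

lemma tele (F : ℕ → ℝ) : ∀ m : ℕ, 1 ≤ m → ∑ n ∈ Icc 2 m, (F n - F (n-1)) = F m - F 1 := by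
  intro m
  induction m with
  | zero => omega
  | succ m ih =>
    intro _
    rcases Nat.eq_zero_or_pos m with rfl | hm
    · simp
    · have e : Icc 2 (m+1) = insert (m+1) (Icc 2 m) := by
        ext x; simp only [Finset.mem_Icc, Finset.mem_insert]; omega
      rw [e, Finset.sum_insert (by simp only [Finset.mem_Icc]; omega), ih hm]
      have : m + 1 - 1 = m := by omega
      rw [this]; ring

lemma Lw_sum_nonpos {H : Type*} [NormedAddCommGroup H] [InnerProductSpace ℝ H]
    (L : H →ₗ[ℝ] H)
    (hsym : ∀ w v : H, (inner ℝ (L w) v : ℝ) = inner ℝ w (L v))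
    (hneg : ∀ w : H, (inner ℝ (L w) w : ℝ) ≤ 0)
    {N : ℕ} (hτ : ∀ k, 1 ≤ k → k ≤ N → 0 < τ k)
    (hS1 : ∀ k, 2 ≤ k → k ≤ N →
      0 < τ k / τ (k - 1) ∧ τ k / τ (k - 1) ≤ (3 + Real.sqrt 17) / 2)
    (u : ℕ → H) {m : ℕ} (hm : 2 ≤ m) (hmN : m ≤ N) :
    ∑ n ∈ Icc 2 m, (inner ℝ (L (wseq τ u n)) (u n) : ℝ) ≤ 0 := by
  set R : ℝ := (3 + Real.sqrt 17) / 2 with hRdef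
  set w : ℕ → H := wseq τ u with hw
  set y : ℕ → ℝ := fun k => Real.sqrt (-(inner ℝ (L (w k)) (w k) : ℝ)) with hy
  set g : ℕ → ℝ := fun k => if 2 ≤ k ∧ k < m then
      (τ (k+1) / τ k) / ((1 + τ (k+1) / τ k) * τ k) * y k ^ 2 else 0 with hg
  have hy0 : ∀ k, 0 ≤ y k := fun k => Real.sqrt_nonneg _
  have hysq : ∀ k, y k ^ 2 = -(inner ℝ (L (w k)) (w k) : ℝ) := by
    intro k
    rw [hy]
    exact Real.sq_sqrt (neg_nonneg.mpr (hneg (w k)))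
  have hy1 : y 1 = 0 := by
    have : w 1 = 0 := rfl
    simp [hy, this]
  -- per-term bound
  have hterm : ∀ n ∈ Icc 2 m, (inner ℝ (L (w n)) (u n) : ℝ) ≤ -((g n - g (n-1)) / 2) := by
    intro n hn
    rw [Finset.mem_Icc] at hn
    have hn2 : 2 ≤ n := hn.1
    have hnN : n ≤ N := le_trans hn.2 hmN
    have hτn : 0 < τ n := hτ n (by omega) hnN
    have hτn1 : 0 < τ (n-1) := hτ (n-1) (by omega) (by omega)
    have hb0 : 0 < bdf2 τ n 0 := b0_pos hτ hS1 (by omega) hnN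
    have hb1 : bdf2 τ n 1 ≤ 0 := b1_nonpos hτ hS1 (by omega) hnN
    have hud : u n = bdf2 τ n 0 • w n + bdf2 τ n 1 • w (n-1) :=
      (wseq_prop u hn2 (ne_of_gt hb0)).symm
    have hexp : (inner ℝ (L (w n)) (u n) : ℝ)
        = bdf2 τ n 0 * inner ℝ (L (w n)) (w n) + bdf2 τ n 1 * inner ℝ (L (w n)) (w (n-1)) := by
      rw [hud, inner_add_right, real_inner_smul_right, real_inner_smul_right]
    -- Cauchy-Schwarz bound on cross term
    have hcs : -(inner ℝ (L (w n)) (w (n-1)) : ℝ) ≤ y n * y (n-1) := psd_cs L hsym hneg _ _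
    have hcross : bdf2 τ n 1 * (inner ℝ (L (w n)) (w (n-1)) : ℝ)
        ≤ (-(bdf2 τ n 1)) * (y n * y (n-1)) := by
      nlinarith
    -- scalar inequality
    set s : ℝ := if n < m then τ (n+1) / τ n else 0 with hs
    have hs0 : 0 ≤ s := by
      rw [hs]
      split_ifs with h
      · have h1 := (hS1 (n+1) (by omega) (by omega)).1
        have e : n + 1 - 1 = n := by omega
        rw [e] at h1
        exact h1.le
      · exact le_rfl
    have hsR : s ≤ R := by
      rw [hs]
      split_ifs with h
      · have h1 := (hS1 (n+1) (by omega) (by omega)).2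
        have e : n + 1 - 1 = n := by omega
        rw [e] at h1
        exact h1
      · rw [hRdef]; positivity
    have hkey : s / ((1 + s) * τ n) ≤ 2 * bdf2 τ n 0 + bdf2 τ n 1 :=
      key_step hτ hS1 hn2 hnN hs0 hsR
    have hgn : g n = s / ((1 + s) * τ n) * y n ^ 2 := by
      by_cases hcase : n < m
      · rw [hg, hs]
        simp only [if_pos hcase, if_pos (show 2 ≤ n ∧ n < m from ⟨hn2, hcase⟩)]
      · have hfalse : ¬(2 ≤ n ∧ n < m) := by tauto
        rw [hg, hs]
        simp only [if_neg hcase, if_neg hfalse]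
        norm_num
    have hgn1 : g (n-1) = (-(bdf2 τ n 1)) * y (n-1) ^ 2 := by
      by_cases h3 : 3 ≤ n
      · have hcond : 2 ≤ n - 1 ∧ n - 1 < m := ⟨by omega, by omega⟩
        have e : n - 1 + 1 = n := by omega
        rw [hg]
        simp only [if_pos hcond, e]
        rw [bdf2_one hn2]
        have hρ0 : 0 < τ n / τ (n-1) := (hS1 n hn2 hnN).1
        have h1ρ : (0:ℝ) < 1 + τ n / τ (n-1) := by linarith
        field_simp
      · have hn2' : n = 2 := by omega
        subst hn2'
        have hcond : ¬(2 ≤ 2 - 1 ∧ 2 - 1 < m) := by omega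
        rw [hg]
        simp only [if_neg hcond]
        show (0:ℝ) = -(bdf2 τ 2 1) * y 1 ^ 2
        rw [hy1]
        ring
    have hquad : 0 ≤ (2 * bdf2 τ n 0 - s/((1+s)*τ n) - (-(bdf2 τ n 1))) * y n ^ 2
        + (-(bdf2 τ n 1)) * (y n - y (n-1))^2 := by
      have h1 : 0 ≤ 2 * bdf2 τ n 0 - s/((1+s)*τ n) - (-(bdf2 τ n 1)) := by linarith
      have h2 : (0:ℝ) ≤ -(bdf2 τ n 1) := by linarith
      positivity
    have hwn : (inner ℝ (L (w n)) (w n) : ℝ) = -(y n ^ 2) := by rw [hysq]; ring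
    rw [hexp, hwn, hgn, hgn1]
    nlinarith [hcross, hy0 n, hy0 (n-1)]
  have hsum := Finset.sum_le_sum hterm
  have htele := tele g m (by omega)
  have hgm : g m = 0 := by rw [hg]; simp
  have hg1 : g 1 = 0 := by rw [hg]; norm_num
  calc ∑ n ∈ Icc 2 m, (inner ℝ (L (w n)) (u n) : ℝ)
      ≤ ∑ n ∈ Icc 2 m, -((g n - g (n-1))/2) := hsum
    _ = (∑ n ∈ Icc 2 m, (g n - g (n-1))) * (-(1/2)) := by
        rw [Finset.sum_mul]
        exact Finset.sum_congr rfl (fun n _ => by ring)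
    _ = 0 := by rw [htele, hgm, hg1]; ring

lemma sum_theta_le {N n : ℕ}
    (hτ : ∀ k, 1 ≤ k → k ≤ N → 0 < τ k)
    (hS1 : ∀ k, 2 ≤ k → k ≤ N →
      0 < τ k / τ (k - 1) ∧ τ k / τ (k - 1) ≤ (3 + Real.sqrt 17) / 2)
    (hn : 2 ≤ n) (hnN : n ≤ N) :
    doc τ n (n - 1) + ∑ j ∈ Icc 2 n, doc τ n (n - j) = τ n ∧
      0 ≤ doc τ n (n - 1) ∧ 0 ≤ ∑ j ∈ Icc 2 n, doc τ n (n - j) := by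
  have hsum := doc_sum_tau hτ hS1 (show 1 ≤ n by omega) hnN
  have e1 : Icc 1 n = insert 1 (Icc 2 n) := by
    ext x; simp only [Finset.mem_Icc, Finset.mem_insert]; omega
  rw [e1, Finset.sum_insert (by simp only [Finset.mem_Icc]; omega)] at hsum
  refine ⟨hsum, doc_nonneg hτ hS1 hn hnN (n-1) le_rfl, Finset.sum_nonneg ?_⟩
  intro j hj
  rw [Finset.mem_Icc] at hj
  exact doc_nonneg hτ hS1 hn hnN (n - j) (by omega)

lemma ML {H : Type*} [NormedAddCommGroup H] [InnerProductSpace ℝ H]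
    (L : H →ₗ[ℝ] H)
    (hsym : ∀ w v : H, (inner ℝ (L w) v : ℝ) = inner ℝ w (L v))
    (hneg : ∀ w : H, (inner ℝ (L w) w : ℝ) ≤ 0)
    {N : ℕ}
    (hτ : ∀ k, 1 ≤ k → k ≤ N → 0 < τ k)
    (hS1 : ∀ k, 2 ≤ k → k ≤ N →
      0 < τ k / τ (k - 1) ∧ τ k / τ (k - 1) ≤ (3 + Real.sqrt 17) / 2)
    (u f : ℕ → H)
    (hscheme : ∀ n, 2 ≤ n → n ≤ N → D2 τ u n = L (u n) + f n)
    {m : ℕ} (hm : 2 ≤ m) (hmN : m ≤ N)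
    (K F1 : ℝ) (hK : ∀ k, 1 ≤ k → k ≤ m → ‖u k‖ ≤ K)
    (hF : ∀ j, 2 ≤ j → j ≤ m → ‖f j‖ ≤ F1) (hF0 : 0 ≤ F1) :
    ‖u m‖^2 ≤ ‖u 1‖^2 + 2 * tlv τ m * K * (‖(τ 1)⁻¹ • (u 1 - u 0)‖ + F1) := by
  have hK0 : 0 ≤ K := le_trans (norm_nonneg (u 1)) (hK 1 le_rfl (by omega))
  set G : ℝ := ‖(τ 1)⁻¹ • (u 1 - u 0)‖ with hG
  have hG0 : 0 ≤ G := norm_nonneg _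
  have hD1 : D2 τ u 1 = (τ 1)⁻¹ • (u 1 - u 0) := by
    rw [D2_two u le_rfl, bdf2_one_one, zero_smul, add_zero, bdf2_one_zero]
  -- per-step inner product bound
  have hinner : ∀ n ∈ Icc 2 m, (inner ℝ (u n - u (n-1)) (u n) : ℝ)
      ≤ τ n * (K * (G + F1)) + inner ℝ (L (wseq τ u n)) (u n) := by
    intro n hn
    rw [Finset.mem_Icc] at hn
    have hn2 : 2 ≤ n := hn.1
    have hnN : n ≤ N := le_trans hn.2 hmN
    have hrep := rep1 u hτ hS1 (show 1 ≤ n by omega) hnN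
    rw [hrep, sum_inner]
    have e1 : Icc 1 n = insert 1 (Icc 2 n) := by
      ext x; simp only [Finset.mem_Icc, Finset.mem_insert]; omega
    rw [e1, Finset.sum_insert (by simp only [Finset.mem_Icc]; omega)]
    obtain ⟨hsum, hθ1, hθrest⟩ := sum_theta_le hτ hS1 hn2 hnN
    -- first term
    have hKn : ‖u n‖ ≤ K := hK n (by omega) hn.2
    have hfirst : (inner ℝ (doc τ n (n - 1) • D2 τ u 1) (u n) : ℝ) ≤ doc τ n (n-1) * (G * K) := by
      rw [real_inner_smul_left]
      apply mul_le_mul_of_nonneg_left _ hθ1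
      calc (inner ℝ (D2 τ u 1) (u n) : ℝ) ≤ ‖D2 τ u 1‖ * ‖u n‖ := real_inner_le_norm _ _
        _ ≤ G * K := by
            rw [hD1, ← hG]
            exact mul_le_mul_of_nonneg_left hKn hG0
    -- second: split scheme
    have hsplit : ∀ j ∈ Icc 2 n, (inner ℝ (doc τ n (n - j) • D2 τ u j) (u n) : ℝ)
        = doc τ n (n-j) * inner ℝ (f j) (u n) + inner ℝ (doc τ n (n - j) • L (u j)) (u n) := by
      intro j hj
      rw [Finset.mem_Icc] at hj
      rw [hscheme j hj.1 (le_trans hj.2 hnN), real_inner_smul_left, real_inner_smul_left,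
        inner_add_left]
      ring
    rw [Finset.sum_congr rfl hsplit, Finset.sum_add_distrib]
    -- f-part bound
    have hfpart : ∑ j ∈ Icc 2 n, doc τ n (n-j) * (inner ℝ (f j) (u n) : ℝ)
        ≤ (∑ j ∈ Icc 2 n, doc τ n (n-j)) * (F1 * K) := by
      rw [Finset.sum_mul]
      apply Finset.sum_le_sum
      intro j hj
      rw [Finset.mem_Icc] at hj
      have hθ : 0 ≤ doc τ n (n - j) := doc_nonneg hτ hS1 hn2 hnN (n-j) (by omega)
      apply mul_le_mul_of_nonneg_left _ hθ
      calc (inner ℝ (f j) (u n) : ℝ) ≤ ‖f j‖ * ‖u n‖ := real_inner_le_norm _ _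
        _ ≤ F1 * K := mul_le_mul (hF j hj.1 (le_trans hj.2 hn.2)) hKn (norm_nonneg _) hF0
    -- L-part identity
    have hLpart : ∑ j ∈ Icc 2 n, (inner ℝ (doc τ n (n - j) • L (u j)) (u n) : ℝ)
        = inner ℝ (L (wseq τ u n)) (u n) := by
      rw [← sum_inner]
      congr 1
      rw [← w_rep u hτ hS1 hn2 hnN, map_sum]
      apply Finset.sum_congr rfl
      intro j _
      rw [map_smul]
    rw [hLpart]
    have hτn0 : 0 ≤ τ n := (hτ n (by omega) hnN).le
    have hb1 : doc τ n (n-1) ≤ τ n := by linarith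
    have hb2 : ∑ j ∈ Icc 2 n, doc τ n (n - j) ≤ τ n := by linarith
    have hGK : 0 ≤ G * K := mul_nonneg hG0 hK0
    have hFK : 0 ≤ F1 * K := mul_nonneg hF0 hK0
    have c1 : doc τ n (n-1) * (G * K) ≤ τ n * (G * K) := mul_le_mul_of_nonneg_right hb1 hGK
    have c2 : (∑ j ∈ Icc 2 n, doc τ n (n-j)) * (F1 * K) ≤ τ n * (F1 * K) :=
      mul_le_mul_of_nonneg_right hb2 hFK
    nlinarith [hfirst, hfpart]
  -- telescoping of norms
  have hlow : ∀ n ∈ Icc 2 m, ‖u n‖^2 - ‖u (n-1)‖^2 ≤ 2 * (inner ℝ (u n - u (n-1)) (u n) : ℝ) := by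
    intro n _
    rw [inner_sub_left, real_inner_self_eq_norm_sq]
    have h1 : (inner ℝ (u (n-1)) (u n) : ℝ) ≤ ‖u (n-1)‖ * ‖u n‖ := real_inner_le_norm _ _
    nlinarith [sq_nonneg (‖u n‖ - ‖u (n-1)‖)]
  have htel := tele (fun k => ‖u k‖^2) m (by omega)
  have hτsum : ∑ n ∈ Icc 2 m, τ n ≤ tlv τ m := by
    unfold tlv
    have e1 : Icc 1 m = insert 1 (Icc 2 m) := by
      ext x; simp only [Finset.mem_Icc, Finset.mem_insert]; omega
    rw [e1, Finset.sum_insert (by simp only [Finset.mem_Icc]; omega)]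
    have := hτ 1 le_rfl (by omega)
    linarith
  have hLsum := Lw_sum_nonpos L hsym hneg hτ hS1 u hm hmN
  have hKGF : 0 ≤ K * (G + F1) := mul_nonneg hK0 (by linarith)
  have hmain : ‖u m‖^2 - ‖u 1‖^2 ≤ 2 * tlv τ m * K * (G + F1) := by
    calc ‖u m‖^2 - ‖u 1‖^2 = ∑ n ∈ Icc 2 m, (‖u n‖^2 - ‖u (n-1)‖^2) := htel.symm
      _ ≤ ∑ n ∈ Icc 2 m, 2 * (inner ℝ (u n - u (n-1)) (u n) : ℝ) := Finset.sum_le_sum hlow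
      _ ≤ ∑ n ∈ Icc 2 m, 2 * (τ n * (K * (G + F1)) + inner ℝ (L (wseq τ u n)) (u n)) := by
          apply Finset.sum_le_sum
          intro n hn
          have := hinner n hn
          linarith
      _ = 2 * ((∑ n ∈ Icc 2 m, τ n) * (K * (G + F1)))
            + 2 * ∑ n ∈ Icc 2 m, (inner ℝ (L (wseq τ u n)) (u n) : ℝ) := by
          rw [Finset.mul_sum, Finset.sum_mul, Finset.mul_sum]
          rw [← Finset.sum_add_distrib]
          apply Finset.sum_congr rfl
          intro n _
          ring
      _ ≤ 2 * (tlv τ m * (K * (G + F1))) + 0 := by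
          have h1 : (∑ n ∈ Icc 2 m, τ n) * (K * (G + F1)) ≤ tlv τ m * (K * (G + F1)) :=
            mul_le_mul_of_nonneg_right hτsum hKGF
          linarith
      _ = 2 * tlv τ m * K * (G + F1) := by ring
  linarith



/-- `L²` norm stability with an arbitrary starting scheme for `u¹`. -/
theorem bdf2_L2_stability_any_start
    {H : Type*} [NormedAddCommGroup H] [InnerProductSpace ℝ H]
    (L : H →ₗ[ℝ] H)
    (hsym : ∀ w v : H, (inner ℝ (L w) v : ℝ) = inner ℝ w (L v))
    (hneg : ∀ w : H, (inner ℝ (L w) w : ℝ) ≤ 0)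
    (N : ℕ) (τ : ℕ → ℝ)
    (hτ : ∀ k, 1 ≤ k → k ≤ N → 0 < τ k)
    (hS1 : ∀ k, 2 ≤ k → k ≤ N →
      0 < τ k / τ (k - 1) ∧ τ k / τ (k - 1) ≤ (3 + Real.sqrt 17) / 2)
    (u f : ℕ → H)
    (hscheme : ∀ n, 2 ≤ n → n ≤ N → D2 τ u n = L (u n) + f n) :
    ∀ n (hn : 2 ≤ n), n ≤ N →
      ‖u n‖ ≤ ‖u 1‖ + 2 * tlv τ n * ‖(τ 1)⁻¹ • (u 1 - u 0)‖ +
        2 * tlv τ n *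
          (Finset.Icc 2 n).sup' (Finset.nonempty_Icc.mpr hn) (fun j => ‖f j‖) := by
  intro n hn hnN
  set G : ℝ := ‖(τ 1)⁻¹ • (u 1 - u 0)‖ with hG
  set F : ℝ := (Finset.Icc 2 n).sup' (Finset.nonempty_Icc.mpr hn) (fun j => ‖f j‖) with hF
  have hG0 : 0 ≤ G := norm_nonneg _
  have hF0 : 0 ≤ F := le_trans (norm_nonneg (f n))
    (Finset.le_sup' (fun j => ‖f j‖) (Finset.mem_Icc.mpr ⟨hn, le_rfl⟩))
  have hFj : ∀ j, 2 ≤ j → j ≤ n → ‖f j‖ ≤ F :=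
    fun j h1 h2 => Finset.le_sup' (fun j => ‖f j‖) (Finset.mem_Icc.mpr ⟨h1, h2⟩)
  have htlv0 : 0 ≤ tlv τ n := by
    unfold tlv
    apply Finset.sum_nonneg
    intro i hi
    rw [Finset.mem_Icc] at hi
    exact (hτ i hi.1 (le_trans hi.2 hnN)).le
  obtain ⟨m0, hm0S, hmax⟩ := Finset.exists_max_image (Finset.Icc 1 n) (fun k => ‖u k‖)
    ⟨1, Finset.mem_Icc.mpr ⟨le_rfl, by omega⟩⟩
  rw [Finset.mem_Icc] at hm0S
  set K : ℝ := ‖u m0‖ with hK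
  have hK0 : 0 ≤ K := norm_nonneg _
  have hun : ‖u n‖ ≤ K := hmax n (Finset.mem_Icc.mpr ⟨by omega, le_rfl⟩)
  have hu1 : ‖u 1‖ ≤ K := hmax 1 (Finset.mem_Icc.mpr ⟨le_rfl, by omega⟩)
  rcases lt_or_ge m0 2 with hm0 | hm0
  · -- maximum attained at u 1 (or u 0-free index 1)
    have h1 : m0 = 1 := by omega
    have hKu1 : K = ‖u 1‖ := by rw [hK, h1]
    have : 0 ≤ 2 * tlv τ n * G + 2 * tlv τ n * F := by positivity
    linarith [hun, hKu1.le]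
  · -- apply main lemma at m0
    have hm0N : m0 ≤ N := le_trans hm0S.2 hnN
    have hML := ML L hsym hneg hτ hS1 u f hscheme hm0 hm0N K F
      (fun k h1 h2 => hmax k (Finset.mem_Icc.mpr ⟨h1, le_trans h2 hm0S.2⟩))
      (fun j h1 h2 => hFj j h1 (le_trans h2 hm0S.2)) hF0
    rw [← hK] at hML
    have htm : tlv τ m0 ≤ tlv τ n := by
      unfold tlv
      apply Finset.sum_le_sum_of_subset_of_nonneg
      · intro x hx
        rw [Finset.mem_Icc] at hx ⊢
        omega
      · intro i hi _
        rw [Finset.mem_Icc] at hi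
        exact (hτ i hi.1 (le_trans hi.2 hnN)).le
    have hstep : K^2 ≤ K * ‖u 1‖ + 2 * tlv τ n * K * (G + F) := by
      have h1 : ‖u 1‖^2 ≤ K * ‖u 1‖ := by nlinarith [norm_nonneg (u 1)]
      have h2 : 2 * tlv τ m0 * K * (G + F) ≤ 2 * tlv τ n * K * (G + F) := by
        have : (0:ℝ) ≤ K * (G + F) := by positivity
        nlinarith
      linarith
    have hKbound : K ≤ ‖u 1‖ + 2 * tlv τ n * (G + F) := by
      rcases eq_or_lt_of_le hK0 with h0 | h0
      · rw [← h0]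
        positivity
      · nlinarith
    calc ‖u n‖ ≤ K := hun
      _ ≤ ‖u 1‖ + 2 * tlv τ n * (G + F) := hKbound
      _ = ‖u 1‖ + 2 * tlv τ n * G + 2 * tlv τ n * F := by ring
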